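/- arXiv:2503.20470 — 2 statements merged into one kernel-verified Lean document; each statement's English description precedes it below -/
import Mathlib

section
/- Let M be a well-founded ω-model of set theory satisfying 'every regular relation has a collapsing function' (axiom Beta). Then for every linear order α coded by a real in M, if M satisfies 'α is well-founded' then α is genuinely well-founded. -/
open FirstOrder Language

namespace BetaRank

abbrev ZFS : Type 1 := ZFSet.{0}
abbrev Ord0 : Type 1 := Ordinal.{0}

abbrev Sent : Type := Language.graph.Sentence
abbrev Fml (n : ℕ) : Type := Language.graph.Formula (Fin n)

/-- The ∈-structure on a class (set) of ZF sets. -/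
def structC (A : Set ZFS) : Language.graph.Structure ↥A where
  RelMap | .adj => fun x => (x 0).1 ∈ (x 1).1

/-- Satisfaction of a sentence in a class of ZF sets with the true membership relation. -/
def SatC (A : Set ZFS) (σ : Sent) : Prop :=
  @Sentence.Realize Language.graph ↥A (structC A) σ

/-- Satisfaction of a theory. -/
def SatT (A : Set ZFS) (T : Set Sent) : Prop := ∀ σ ∈ T, SatC A σ

/-- The complete first-order theory of a class of ZF sets. -/
def ThC (A : Set ZFS) : Set Sent := { σ | SatC A σ }

/-- Realization of a formula with free variables in a class of ZF sets. -/
def FRealize (A : Set ZFS) {n : ℕ} (φ : Fml n) (v : Fin n → ↥A) : Prop :=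
  @Formula.Realize Language.graph ↥A (structC A) _ φ v

/-- Realization of a bounded formula (all variables among the `n` bound slots). -/
def BRealize (A : Set ZFS) {n : ℕ} (φ : Language.graph.BoundedFormula Empty n)
    (xs : Fin n → ↥A) : Prop :=
  @BoundedFormula.Realize Language.graph ↥A (structC A) _ _ φ Empty.elim xs

/-- Satisfaction over (the members of) a single ZF set with the true membership relation. -/
def SatZ (M : ZFS) (σ : Sent) : Prop := SatC M.toSet σ

def SatZT (M : ZFS) (T : Set Sent) : Prop := ∀ σ ∈ T, SatZ M σ

/-- A transitive (set) model of a theory: the formal rendering of a β-model of set theory. -/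
def TransModel (M : ZFS) (T : Set Sent) : Prop := M.IsTransitive ∧ SatZT M T

/-- The first-order definable subsets (with parameters) of a class of ZF sets. -/
def defSub (A : Set ZFS) : Set ZFS :=
  { y | (∀ z ∈ y, z ∈ A) ∧ ∃ (k : ℕ) (φ : Fml (k + 1)) (p : Fin k → ↥A),
      ∀ z : ZFS, z ∈ y ↔ ∃ h : z ∈ A, FRealize A φ (Fin.cons ⟨z, h⟩ p) }

/-- The constructible hierarchy, as classes of ZF sets. -/
noncomputable def Lv (α : Ord0) : Set ZFS :=
  Ordinal.limitRecOn α ∅ (fun _ ih => defSub ih)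
    (fun o _ ih => { x | ∃ β, ∃ h : β < o, x ∈ ih β h })

/-- The class L of constructible sets. -/
noncomputable def Lclass : Set ZFS := { x | ∃ α, x ∈ Lv α }

/-- `A` is a fully elementary subclass of `B` (with respect to ∈). -/
def ElemIn (A B : Set ZFS) : Prop :=
  A ⊆ B ∧ ∀ (n : ℕ) (φ : Fml n) (v : Fin n → ZFS) (hA : ∀ i, v i ∈ A) (hB : ∀ i, v i ∈ B),
    FRealize A φ (fun i => ⟨v i, hA i⟩) ↔ FRealize B φ (fun i => ⟨v i, hB i⟩)

/-- `σ̂(α)`: the least `σ` with `L_σ ≺ L_α`. -/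
noncomputable def sigmaHat (α : Ord0) : Ord0 := sInf { σ | ElemIn (Lv σ) (Lv α) }

/-- Δ₀ (bounded) formulas in the language of set theory. -/
inductive IsDelta0 : ∀ {α : Type} {n : ℕ}, Language.graph.BoundedFormula α n → Prop
  | falsum {α n} : IsDelta0 (BoundedFormula.falsum : Language.graph.BoundedFormula α n)
  | equal {α n} (t u : Language.graph.Term (α ⊕ Fin n)) : IsDelta0 (Term.bdEqual t u)
  | rel {α n l} (R : Language.graph.Relations l)
      (ts : Fin l → Language.graph.Term (α ⊕ Fin n)) : IsDelta0 (BoundedFormula.rel R ts)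
  | imp {α n} {φ ψ : Language.graph.BoundedFormula α n} :
      IsDelta0 φ → IsDelta0 ψ → IsDelta0 (φ.imp ψ)
  | ball {α n} (t : Language.graph.Term (α ⊕ Fin n))
      {φ : Language.graph.BoundedFormula α (n + 1)} : IsDelta0 φ →
      IsDelta0 ((BoundedFormula.imp
        (Language.adj.boundedFormula₂ (Term.var (Sum.inr (Fin.last n))) (t.liftAt 1 n)) φ).all)

/-- Σ₁ formulas: existential quantifiers in front of a Δ₀ matrix. -/
inductive IsSigma1 : ∀ {α : Type} {n : ℕ}, Language.graph.BoundedFormula α n → Prop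
  | of_delta0 {α n} {φ : Language.graph.BoundedFormula α n} : IsDelta0 φ → IsSigma1 φ
  | ex {α n} {φ : Language.graph.BoundedFormula α (n + 1)} : IsSigma1 φ → IsSigma1 φ.ex

/-- Δ₀-collection holds in the class `A`. -/
def Delta0Collection (A : Set ZFS) : Prop :=
  ∀ (n : ℕ) (φ : Language.graph.BoundedFormula Empty (n + 2)), IsDelta0 φ →
    ∀ (p : Fin n → ↥A) (a : ↥A),
      (∀ x : ↥A, x.1 ∈ a.1 → ∃ y : ↥A, BRealize A φ (Fin.snoc (Fin.snoc p x) y)) →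
      ∃ b : ↥A, ∀ x : ↥A, x.1 ∈ a.1 →
        ∃ y : ↥A, y.1 ∈ b.1 ∧ BRealize A φ (Fin.snoc (Fin.snoc p x) y)

/-- Full first-order collection holds in the class `A`. -/
def FullCollection (A : Set ZFS) : Prop :=
  ∀ (n : ℕ) (φ : Language.graph.BoundedFormula Empty (n + 2)),
    ∀ (p : Fin n → ↥A) (a : ↥A),
      (∀ x : ↥A, x.1 ∈ a.1 → ∃ y : ↥A, BRealize A φ (Fin.snoc (Fin.snoc p x) y)) →
      ∃ b : ↥A, ∀ x : ↥A, x.1 ∈ a.1 →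
        ∃ y : ↥A, y.1 ∈ b.1 ∧ BRealize A φ (Fin.snoc (Fin.snoc p x) y)

/-- An ordinal is admissible iff it is a limit and `L_α` satisfies Δ₀-collection. -/
def AdmissibleOrd (α : Ord0) : Prop := Order.IsSuccLimit α ∧ Delta0Collection (Lv α)

/-- `ξ` is a limit of admissible ordinals. -/
def LimitOfAdmissibles (ξ : Ord0) : Prop :=
  0 < ξ ∧ ∀ γ < ξ, ∃ δ, γ < δ ∧ δ < ξ ∧ AdmissibleOrd δ

/-- `ξ` is locally countable: `L_ξ` satisfies "every set is countable". -/
def LocCtbl (ξ : Ord0) : Prop :=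
  ∀ x ∈ Lv ξ, ∃ f ∈ Lv ξ, ZFSet.IsFunc x ZFSet.omega f ∧
    ∀ z w u : ZFS, z.pair u ∈ f → w.pair u ∈ f → z = w

/-- Every element of `A` is definable in `(A, ∈)` without parameters. -/
def PointwiseDefinable (A : Set ZFS) : Prop :=
  ∀ x : ↥A, ∃ φ : Fml 1, ∀ y : ↥A, FRealize A φ ![y] ↔ y = x

/-- A set is (like) a von Neumann ordinal. -/
def IsVN (x : ZFS) : Prop := x.IsOrdinal

/-- The von Neumann natural numbers as ZF sets. -/
def numZF : ℕ → ZFS := fun n => Nat.rec ∅ (fun _ ih => insert ih ih) n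

/-- f is a set of ordered pairs which is single-valued. -/
def IsFunLike (f : ZFS) : Prop :=
  (∀ p ∈ f, ∃ x y : ZFS, p = x.pair y) ∧
    ∀ x y₁ y₂ : ZFS, x.pair y₁ ∈ f → x.pair y₂ ∈ f → y₁ = y₂

/-- `x` is in the field of the relation `r`. -/
def InFld (r x : ZFS) : Prop := ∃ y : ZFS, x.pair y ∈ r ∨ y.pair x ∈ r

/-- `f` is the Mostowski collapsing function of the relation `r`:
`dom f = field r` and `f(x) = { f(y) : (y,x) ∈ r }`. -/
def IsCollapsing (f r : ZFS) : Prop :=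
  IsFunLike f ∧ (∀ x : ZFS, (∃ y, x.pair y ∈ f) ↔ InFld r x) ∧
    ∀ x v : ZFS, x.pair v ∈ f → ∀ b : ZFS, b ∈ v ↔ ∃ y : ZFS, y.pair x ∈ r ∧ y.pair b ∈ f

/-- `r` is a regular relation from the point of view of `M`:
every nonempty set in `M` has an `r`-minimal element. -/
def RegularIn (M r : ZFS) : Prop :=
  ∀ u ∈ M, u ≠ ∅ → ∃ x ∈ u, ∀ y ∈ u, y.pair x ∉ r

/-- The axiom Beta holds in `M`: every regular relation in `M` has a collapsing function in `M`. -/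
def BetaIn (M : ZFS) : Prop := ∀ r ∈ M, RegularIn M r → ∃ f ∈ M, IsCollapsing f r

/-- An `L_∈`-structure coded by a pair of ZF sets (domain, membership relation). -/
def structP (m e : ZFS) : Language.graph.Structure ↥m.toSet where
  RelMap | .adj => fun x => ZFSet.pair (x 0).1 (x 1).1 ∈ e

def SatP (m e : ZFS) (T : Set Sent) : Prop :=
  ∀ σ ∈ T, @Sentence.Realize Language.graph ↥m.toSet (structP m e) σ

/-- The pair `(m, e)` is a well-founded `L_∈`-structure. -/
def WFPair (m e : ZFS) : Prop :=
  (∀ p ∈ e, ∃ x ∈ m, ∃ y ∈ m, p = x.pair y) ∧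
    WellFounded (fun x y : ↥m.toSet => ZFSet.pair x.1 y.1 ∈ e)

/-- A well-founded coded model of the theory `T`. -/
def WFModelP (m e : ZFS) (T : Set Sent) : Prop := WFPair m e ∧ SatP m e T


/-- Let `M` be a well-founded (rendered: transitive) ω-model of set theory
satisfying the axiom Beta.  Then for every linear order `α` coded by a real in `M`, if `M`
satisfies "`α` is well-founded" then `α` is genuinely well-founded. -/
theorem wellFounded_of_internal_wellFounded_of_beta (M : ZFS)
    (htrans : M.IsTransitive) (homega : ZFSet.omega ∈ M) (hbeta : BetaIn M)
    (α : ZFS) (hαM : α ∈ M)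
    -- α is a relation on (a subset of) ω, i.e. it is coded by a real:
    (hreal : ∀ p ∈ α, ∃ m ∈ ZFSet.omega, ∃ n ∈ ZFSet.omega, p = ZFSet.pair m n)
    -- α is a (strict) linear order:
    (htr : ∀ a b c : ZFS, a.pair b ∈ α → b.pair c ∈ α → a.pair c ∈ α)
    (hirr : ∀ a : ZFS, a.pair a ∉ α)
    (htot : ∀ a b : ZFS, InFld α a → InFld α b → a = b ∨ a.pair b ∈ α ∨ b.pair a ∈ α)
    -- M satisfies "α is well-founded": every nonempty set in M of field elements has
    -- an α-minimal element:
    (hwfM : ∀ u ∈ M, u ≠ ∅ → (∀ x ∈ u, InFld α x) → ∃ x ∈ u, ∀ y ∈ u, y.pair x ∉ α) :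
    WellFounded fun a b : ZFS => a.pair b ∈ α := by
  have hreg : RegularIn M α := by
    intro u hu hne
    by_cases hall : ∀ x ∈ u, InFld α x
    · exact hwfM u hu hne hall
    · push_neg at hall
      obtain ⟨x, hxu, hx⟩ := hall
      exact ⟨x, hxu, fun y _ hpair => hx ⟨y, Or.inr hpair⟩⟩
  obtain ⟨f, _, ⟨_, hdom, hval⟩⟩ := hbeta α hαM hreg
  have key : ∀ v : ZFS, ∀ a : ZFS, a.pair v ∈ f → Acc (fun a b : ZFS => a.pair b ∈ α) a := by
    intro v
    induction v using ZFSet.inductionOn with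
    | _ v ih => ?_
    intro a haf
    refine Acc.intro a fun y hy => ?_
    have hyf : InFld α y := ⟨a, Or.inl hy⟩
    obtain ⟨w, hw⟩ := (hdom y).2 hyf
    have hwv : w ∈ v := (hval a v haf w).2 ⟨y, hy, hw⟩
    exact ih w hwv y hw
  refine ⟨fun a => ?_⟩
  by_cases ha : InFld α a
  · obtain ⟨v, hv⟩ := (hdom a).2 ha
    exact key v a hv
  · exact Acc.intro a fun y hy => absurd ⟨y, Or.inr hy⟩ ha

end BetaRank
end

section
/- If α and β are distinct ordinals such that every element of L_α is definable without parameters in L_α and every element of L_β is definable without parameters in L_β, then Th(L_α) ≠ Th(L_β). -/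
open FirstOrder Language

namespace BetaRank

section Aux
-- gadgets
noncomputable def uSent {n : ℕ} (φ : Fml n) : Sent :=
  Formula.iAlls (Fin n) (φ.relabel (Sum.inr : Fin n → Empty ⊕ Fin n))

noncomputable def eSent {n : ℕ} (φ : Fml n) : Sent :=
  Formula.iExs (Fin n) (φ.relabel (Sum.inr : Fin n → Empty ⊕ Fin n))

lemma satC_uSent {A : Set ZFS} {n : ℕ} (φ : Fml n) :
    SatC A (uSent φ) ↔ ∀ v : Fin n → ↥A, FRealize A φ v := by
  letI := structC A
  show Formula.Realize _ _ ↔ _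
  rw [uSent, Formula.realize_iAlls]
  simp only [Formula.realize_relabel]
  constructor
  · intro h v; have := h v
    exact this
  · intro h v; have := h v
    exact this

lemma satC_eSent {A : Set ZFS} {n : ℕ} (φ : Fml n) :
    SatC A (eSent φ) ↔ ∃ v : Fin n → ↥A, FRealize A φ v := by
  letI := structC A
  show Formula.Realize _ _ ↔ _
  rw [eSent, Formula.realize_iExs]
  simp only [Formula.realize_relabel]
  constructor
  · rintro ⟨v, h⟩; exact ⟨v, h⟩
  · rintro ⟨v, h⟩; exact ⟨v, h⟩

abbrev adjF : Fml 2 := Language.adj.formula₂ (Term.var 0) (Term.var 1)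
abbrev eqF : Fml 2 := Term.equal (Term.var 0) (Term.var 1)

lemma frealize_adjF {A : Set ZFS} (v : Fin 2 → ↥A) :
    FRealize A adjF v ↔ (v 0).1 ∈ (v 1).1 := by
  letI := structC A
  show Formula.Realize _ _ ↔ _
  rw [Formula.realize_rel₂]
  exact Iff.rfl

lemma frealize_eqF {A : Set ZFS} (v : Fin 2 → ↥A) :
    FRealize A eqF v ↔ v 0 = v 1 := by
  letI := structC A
  show Formula.Realize _ _ ↔ _
  rw [Formula.realize_equal]
  exact Iff.rfl

lemma frealize_not {A : Set ZFS} {n} (φ : Fml n) (v : Fin n → ↥A) :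
    FRealize A φ.not v ↔ ¬ FRealize A φ v := by
  letI := structC A
  exact Formula.realize_not

lemma frealize_imp {A : Set ZFS} {n} (φ ψ : Fml n) (v : Fin n → ↥A) :
    FRealize A (φ.imp ψ) v ↔ (FRealize A φ v → FRealize A ψ v) := by
  letI := structC A
  exact Formula.realize_imp

lemma frealize_inf {A : Set ZFS} {n} (φ ψ : Fml n) (v : Fin n → ↥A) :
    FRealize A (φ ⊓ ψ) v ↔ (FRealize A φ v ∧ FRealize A ψ v) := by
  letI := structC A
  exact Formula.realize_inf

lemma frealize_relabel {A : Set ZFS} {m n} (φ : Fml m) (g : Fin m → Fin n) (v : Fin n → ↥A) :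
    FRealize A (φ.relabel g) v ↔ FRealize A φ (v ∘ g) := by
  letI := structC A
  exact Formula.realize_relabel

lemma frealize_top {A : Set ZFS} {n} (v : Fin n → ↥A) :
    FRealize A (⊤ : Fml n) v := by
  letI := structC A
  exact Formula.realize_top.2 trivial





noncomputable def pairSent (φ ψ : Fml 1) (θ : Fml 2) : Sent :=
  uSent (((φ.relabel (fun _ => 0)) ⊓ (ψ.relabel (fun _ => 1))).imp θ)

lemma vec1 {α : Type*} (x : α) : (![x] : Fin 1 → α) = fun _ => x := by
  funext i; fin_cases i <;> rfl

lemma vec2 {α : Type*} (v : Fin 2 → α) : ![v 0, v 1] = v := by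
  funext i; fin_cases i <;> rfl

lemma vec1' {α : Type*} (v : Fin 1 → α) : ![v 0] = v := by
  funext i; fin_cases i <;> rfl

lemma comp0 {α : Type*} (x y : α) : (![x, y] ∘ fun _ : Fin 1 => (0 : Fin 2)) = ![x] := by
  funext i; fin_cases i <;> rfl

lemma comp1 {α : Type*} (x y : α) : (![x, y] ∘ fun _ : Fin 1 => (1 : Fin 2)) = ![y] := by
  funext i; fin_cases i <;> rfl

lemma satC_pairSent {A : Set ZFS} (φ ψ : Fml 1) (θ : Fml 2) :
    SatC A (pairSent φ ψ θ) ↔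
      ∀ x y : ↥A, FRealize A φ ![x] → FRealize A ψ ![y] → FRealize A θ ![x, y] := by
  rw [pairSent, satC_uSent]
  constructor
  · intro h x y hx hy
    have := h ![x, y]
    rw [frealize_imp, frealize_inf, frealize_relabel, frealize_relabel] at this
    exact this ⟨by rwa [comp0], by rwa [comp1]⟩
  · intro h v
    rw [frealize_imp, frealize_inf, frealize_relabel, frealize_relabel]
    rintro ⟨h1, h2⟩
    rw [← vec2 v, comp0] at h1
    rw [← vec2 v, comp1] at h2
    have := h (v 0) (v 1) h1 h2
    rwa [vec2] at this

lemma thC_iff {A B : Set ZFS} (h : ThC A = ThC B) (σ : Sent) : SatC A σ ↔ SatC B σ :=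
  Set.ext_iff.1 h σ

lemma exists_iso {A B : Set ZFS} (hA : PointwiseDefinable A) (hB : PointwiseDefinable B)
    (hTh : ThC A = ThC B) :
    ∃ g : ↥A → ↥B, Function.Surjective g ∧
      ∀ x y : ↥A, (x.1 ∈ y.1 ↔ (g x).1 ∈ (g y).1) := by
  -- defining formulas
  choose φ hφ using hA
  -- unique realizer of φ x in B
  have hex : ∀ x : ↥A, ∃ y : ↥B, FRealize B (φ x) ![y] := by
    intro x
    have hAx : SatC A (eSent (φ x)) := by
      rw [satC_eSent]
      exact ⟨![x], (hφ x x).2 rfl⟩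
    have := (thC_iff hTh _).1 hAx
    rw [satC_eSent] at this
    obtain ⟨v, hv⟩ := this
    exact ⟨v 0, by rwa [vec1']⟩
  have huniqB : ∀ x : ↥A, ∀ y z : ↥B,
      FRealize B (φ x) ![y] → FRealize B (φ x) ![z] → y = z := by
    intro x y z hy hz
    have hAx : SatC A (pairSent (φ x) (φ x) eqF) := by
      rw [satC_pairSent]
      intro a b ha hb
      rw [frealize_eqF]
      show a = b
      rw [(hφ x a).1 ha, (hφ x b).1 hb]
    have := (thC_iff hTh _).1 hAx
    rw [satC_pairSent] at this
    have := this y z hy hz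
    rw [frealize_eqF] at this
    exact this
  choose g hg using hex
  refine ⟨g, ?_, ?_⟩
  · -- surjective
    intro y
    choose ψ hψ using hB y
    have hBy : SatC B (eSent ψ) := by
      rw [satC_eSent]
      exact ⟨![y], (hψ y).2 rfl⟩
    have : SatC A (eSent ψ) := (thC_iff hTh _).2 hBy
    rw [satC_eSent] at this
    obtain ⟨v, hv⟩ := this
    set x := v 0 with hx
    have hvx : FRealize A ψ ![x] := by rwa [vec1']
    -- uniqueness of ψ-realizers in A (transferred from B)
    have huniqA : ∀ a b : ↥A, FRealize A ψ ![a] → FRealize A ψ ![b] → a = b := by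
      intro a b ha hb
      have hBu : SatC B (pairSent ψ ψ eqF) := by
        rw [satC_pairSent]
        intro c d hc hd
        rw [frealize_eqF]
        show c = d
        rw [(hψ c).1 hc, (hψ d).1 hd]
      have := (thC_iff hTh _).2 hBu
      rw [satC_pairSent] at this
      have := this a b ha hb
      rwa [frealize_eqF] at this
    -- A ⊨ ∀ a b, ψ a → φ x b → a = b
    have hAe : SatC A (pairSent ψ (φ x) eqF) := by
      rw [satC_pairSent]
      intro a b ha hb
      rw [frealize_eqF]
      show a = b
      rw [(hφ x b).1 hb, huniqA a x ha hvx]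
    have := (thC_iff hTh _).1 hAe
    rw [satC_pairSent] at this
    have h2 := this y (g x) ((hψ y).2 rfl) (hg x)
    rw [frealize_eqF] at h2
    exact ⟨x, h2.symm⟩
  · -- membership preservation
    intro x y
    constructor
    · intro hxy
      have hAx : SatC A (pairSent (φ x) (φ y) adjF) := by
        rw [satC_pairSent]
        intro a b ha hb
        rw [frealize_adjF]
        show (a : ZFS) ∈ (b : ZFS)
        rw [show a = x from (hφ x a).1 ha, show b = y from (hφ y b).1 hb]
        exact hxy
      have := (thC_iff hTh _).1 hAx
      rw [satC_pairSent] at this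
      have := this (g x) (g y) (hg x) (hg y)
      rwa [frealize_adjF] at this
    · intro hxy
      by_contra hne
      have hAx : SatC A (pairSent (φ x) (φ y) adjF.not) := by
        rw [satC_pairSent]
        intro a b ha hb
        rw [frealize_not, frealize_adjF]
        show ¬ (a : ZFS) ∈ (b : ZFS)
        rw [show a = x from (hφ x a).1 ha, show b = y from (hφ y b).1 hb]
        exact hne
      have := (thC_iff hTh _).1 hAx
      rw [satC_pairSent] at this
      have := this (g x) (g y) (hg x) (hg y)
      rw [frealize_not, frealize_adjF] at this
      exact this hxy





def Tr (A : Set ZFS) : Prop := ∀ x ∈ A, ∀ z : ZFS, z ∈ x → z ∈ A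

lemma classes_eq {A B : Set ZFS} (trA : Tr A) (trB : Tr B) (g : ↥A → ↥B)
    (gsurj : Function.Surjective g)
    (gmem : ∀ x y : ↥A, (x.1 ∈ y.1 ↔ (g x).1 ∈ (g y).1)) : A = B := by
  have key : ∀ x : ZFS, ∀ hx : x ∈ A, (g ⟨x, hx⟩).1 = x := by
    intro x
    induction x using ZFSet.mem_wf.induction with
    | _ x IH =>
      intro hx
      apply ZFSet.ext
      intro z
      constructor
      · intro hz
        have hzB : z ∈ B := trB _ (g ⟨x, hx⟩).2 z hz
        obtain ⟨w, hw⟩ := gsurj ⟨z, hzB⟩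
        have : (w : ZFS) ∈ x := by
          rw [gmem w ⟨x, hx⟩, hw]
          exact hz
        have hww := IH w.1 this w.2
        have hgw : (⟨w.1, w.2⟩ : ↥A) = w := rfl
        rw [hgw, hw] at hww
        have hzw : z = w.1 := hww
        rw [hzw]
        exact this
      · intro hz
        have hzA : z ∈ A := trA x hx z hz
        have : (g ⟨z, hzA⟩).1 ∈ (g ⟨x, hx⟩).1 := (gmem ⟨z, hzA⟩ ⟨x, hx⟩).1 hz
        rwa [IH z hz hzA] at this
  apply Set.eq_of_subset_of_subset
  · intro x hx
    have := key x hx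
    rw [← this]
    exact (g ⟨x, hx⟩).2
  · intro y hy
    obtain ⟨x, hx⟩ := gsurj ⟨y, hy⟩
    have := key x.1 x.2
    have hgx : (⟨x.1, x.2⟩ : ↥A) = x := rfl
    rw [hgx, hx] at this
    have hyx : y = x.1 := this
    rw [hyx]
    exact x.2





lemma Lv_zero : Lv 0 = ∅ := Ordinal.limitRecOn_zero _ _ _

lemma Lv_succ (γ : Ord0) : Lv (Order.succ γ) = defSub (Lv γ) :=
  Ordinal.limitRecOn_succ _ _ _ _

lemma Lv_limit {γ : Ord0} (h : Order.IsSuccLimit γ) : Lv γ = { x | ∃ β, ∃ _ : β < γ, x ∈ Lv β } :=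
  Ordinal.limitRecOn_limit _ _ _ _ h

-- a generic realize lemma for the membership formula with one parameter
lemma mem_defSub_self {A : Set ZFS} (trA : Tr A) {x : ZFS} (hx : x ∈ A) : x ∈ defSub A := by
  refine ⟨fun z hz => trA x hx z hz, 1, adjF, ![⟨x, hx⟩], fun z => ?_⟩
  constructor
  · intro hz
    refine ⟨trA x hx z hz, ?_⟩
    rw [frealize_adjF]
    exact hz
  · rintro ⟨h, hreal⟩
    rw [frealize_adjF] at hreal
    exact hreal

lemma defSub_sub {A : Set ZFS} (trA : Tr A) : A ⊆ defSub A := fun _ hx => mem_defSub_self trA hx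

lemma defSub_tr {A : Set ZFS} (trA : Tr A) : Tr (defSub A) := by
  intro x hx z hz
  exact defSub_sub trA (hx.1 z hz)

lemma Lv_tr_mono : ∀ δ : Ord0, Tr (Lv δ) ∧ ∀ γ < δ, Lv γ ⊆ Lv δ := by
  intro δ
  induction δ using Ordinal.induction with
  | _ δ IH =>
    rcases Ordinal.zero_or_succ_or_isSuccLimit δ with h0 | ⟨γ', rfl⟩ | hlim
    · subst h0
      refine ⟨?_, ?_⟩
      · intro x hx; rw [Lv_zero] at hx; exact absurd hx (Set.notMem_empty x)
      · intro γ hγ; exact absurd hγ (not_lt.2 (zero_le : (0 : Ord0) ≤ γ))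
    · have hγ' : γ' < Order.succ γ' := Order.lt_succ γ'
      obtain ⟨htr, hmono⟩ := IH γ' hγ'
      rw [Lv_succ]
      refine ⟨defSub_tr htr, ?_⟩
      intro γ hγ
      rcases (Order.lt_succ_iff.1 hγ).lt_or_eq with h | h
      · exact (hmono γ h).trans (defSub_sub htr)
      · subst h; exact defSub_sub htr
    · rw [Lv_limit hlim]
      constructor
      · rintro x ⟨β, hβ, hx⟩ z hz
        exact ⟨β, hβ, (IH β hβ).1 x hx z hz⟩
      · intro γ hγ x hx
        exact ⟨γ, hγ, hx⟩

lemma Lv_mono {γ δ : Ord0} (h : γ ≤ δ) : Lv γ ⊆ Lv δ := by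
  rcases h.lt_or_eq with h | h
  · exact (Lv_tr_mono δ).2 γ h
  · subst h; exact subset_rfl

lemma exists_code : ∀ γ : Ord0, ∃ u : ZFS, ∀ z : ZFS, z ∈ u ↔ z ∈ Lv γ := by
  intro γ
  induction γ using Ordinal.induction with
  | _ γ IH =>
    rcases Ordinal.zero_or_succ_or_isSuccLimit γ with h0 | ⟨γ', rfl⟩ | hlim
    · subst h0
      exact ⟨∅, fun z => by rw [Lv_zero]; simp [ZFSet.notMem_empty]⟩
    · obtain ⟨u, hu⟩ := IH γ' (Order.lt_succ γ')
      refine ⟨ZFSet.sep (fun y => y ∈ Lv (Order.succ γ')) (ZFSet.powerset u), fun z => ?_⟩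
      rw [ZFSet.mem_sep, ZFSet.mem_powerset]
      constructor
      · rintro ⟨_, h⟩; exact h
      · intro h
        refine ⟨?_, h⟩
        intro w hw
        rw [Lv_succ] at h
        exact (hu w).2 (h.1 w hw)
    · have : ∀ i : γ.ToType, ∃ u : ZFS, ∀ z : ZFS,
          z ∈ u ↔ z ∈ Lv ((Ordinal.ToType.mk (o := γ)).symm i).1 := by
        intro i
        exact IH _ ((Ordinal.ToType.mk (o := γ)).symm i).2
      choose U hU using this
      refine ⟨ZFSet.sUnion (ZFSet.range U), fun z => ?_⟩
      rw [ZFSet.mem_sUnion]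
      constructor
      · rintro ⟨w, hw, hz⟩
        rw [ZFSet.mem_range] at hw
        obtain ⟨i, rfl⟩ := hw
        rw [hU i] at hz
        rw [Lv_limit hlim]
        exact ⟨_, ((Ordinal.ToType.mk (o := γ)).symm i).2, hz⟩
      · intro hz
        rw [Lv_limit hlim] at hz
        obtain ⟨β, hβ, hz⟩ := hz
        refine ⟨U (Ordinal.ToType.mk (o := γ) ⟨β, hβ⟩), ZFSet.mem_range.2 ⟨_, rfl⟩, ?_⟩
        rw [hU]
        rw [OrderIso.symm_apply_apply]
        exact hz

noncomputable def Lset (γ : Ord0) : ZFS := (exists_code γ).choose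

lemma mem_Lset {γ : Ord0} {z : ZFS} : z ∈ Lset γ ↔ z ∈ Lv γ := (exists_code γ).choose_spec z

lemma Lset_mem_Lv_succ (γ : Ord0) : Lset γ ∈ Lv (Order.succ γ) := by
  rw [Lv_succ]
  refine ⟨fun z hz => mem_Lset.1 hz, 0, (⊤ : Fml 1), ![], fun z => ?_⟩
  rw [mem_Lset]
  constructor
  · intro h; exact ⟨h, frealize_top _⟩
  · rintro ⟨h, -⟩; exact h

lemma rank_lt_of_mem_Lv : ∀ γ : Ord0, ∀ x ∈ Lv γ, x.rank < γ := by
  intro γ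
  induction γ using Ordinal.induction with
  | _ γ IH =>
    rcases Ordinal.zero_or_succ_or_isSuccLimit γ with h0 | ⟨γ', rfl⟩ | hlim
    · subst h0; intro x hx; rw [Lv_zero] at hx; exact absurd hx (Set.notMem_empty x)
    · intro x hx
      rw [Lv_succ] at hx
      have : x.rank ≤ γ' := by
        rw [ZFSet.rank_le_iff]
        intro y hy
        exact IH γ' (Order.lt_succ γ') y (hx.1 y hy)
      exact lt_of_le_of_lt this (Order.lt_succ γ')
    · intro x hx
      rw [Lv_limit hlim] at hx
      obtain ⟨β, hβ, hx⟩ := hx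
      exact (IH β hβ x hx).trans hβ

lemma le_rank_Lset : ∀ γ : Ord0, γ ≤ (Lset γ).rank := by
  intro γ
  induction γ using Ordinal.induction with
  | _ γ IH =>
    by_contra hlt
    push_neg at hlt
    have h1 : Lset (Lset γ).rank ∈ Lv γ := by
      have : Order.succ (Lset γ).rank ≤ γ := Order.succ_le_of_lt hlt
      exact Lv_mono this (Lset_mem_Lv_succ _)
    have h2 : (Lset (Lset γ).rank).rank < (Lset γ).rank :=
      ZFSet.rank_lt_of_mem (mem_Lset.2 h1)
    exact absurd (IH _ hlt) (not_le.2 h2)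



end Aux

/-- if `α ≠ β` and both `L_α` and `L_β` are pointwise definable, then
`Th(L_α) ≠ Th(L_β)`. -/
theorem theories_distinct_of_pointwiseDefinable (α β : Ord0) (hne : α ≠ β)
    (hα : PointwiseDefinable (Lv α)) (hβ : PointwiseDefinable (Lv β)) :
    ThC (Lv α) ≠ ThC (Lv β) := by
  intro hTh
  obtain ⟨g, gsurj, gmem⟩ := exists_iso hα hβ hTh
  have hAB : Lv α = Lv β := classes_eq (Lv_tr_mono α).1 (Lv_tr_mono β).1 g gsurj gmem
  rcases hne.lt_or_gt with h | h
  · have hm : Lset α ∈ Lv α := by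
      rw [hAB]; exact Lv_mono (Order.succ_le_of_lt h) (Lset_mem_Lv_succ α)
    exact absurd (le_rank_Lset α) (not_le.2 (rank_lt_of_mem_Lv α _ hm))
  · have hm : Lset β ∈ Lv β := by
      rw [← hAB]; exact Lv_mono (Order.succ_le_of_lt h) (Lset_mem_Lv_succ β)
    exact absurd (le_rank_Lset β) (not_le.2 (rank_lt_of_mem_Lv β _ hm))

end BetaRank
end
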